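/- arXiv:1408.4231 — 7 statements merged into one kernel-verified Lean document; each statement's English description precedes it below -/
import Mathlib

section
/- Let F be a field, f ∈ F[X₁,…,Xₙ] and g ∈ F[Y₁,…,Yₘ] non-constant polynomials, and c ∈ F nonzero. If g is square-free in the polynomial ring over the algebraic closure of F, then the polynomial h(X,Y) = f(X)·g(Y) + c is absolutely irreducible (i.e. irreducible over the algebraic closure of F). -/
open MvPolynomial

section Helpers

variable {σ : Type*} {R : Type*}

private lemma exists_degree_eq_totalDegree [CommSemiring R] {p : MvPolynomial σ R}
    (hp : p ≠ 0) : ∃ d ∈ p.support, d.degree = p.totalDegree := by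
  obtain ⟨d, hd, hdeg⟩ := Finset.exists_mem_eq_sup p.support
    (support_nonempty.mpr hp) (fun s => s.sum fun _ e => e)
  refine ⟨d, hd, ?_⟩
  rw [totalDegree, hdeg]
  rfl

private lemma degree_le_of_mem_support [CommSemiring R] {p : MvPolynomial σ R}
    {d : σ →₀ ℕ} (hd : d ∈ p.support) : d.degree ≤ p.totalDegree :=
  le_totalDegree hd

private lemma hc_top_ne_zero [CommSemiring R] {p : MvPolynomial σ R} (hp : p ≠ 0) :
    homogeneousComponent p.totalDegree p ≠ 0 := by
  obtain ⟨d, hd, hdeg⟩ := exists_degree_eq_totalDegree hp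
  intro h0
  have h1 := coeff_homogeneousComponent (σ := σ) (R := R) (n := p.totalDegree) (φ := p) d
  rw [h0, coeff_zero, if_pos hdeg] at h1
  exact (mem_support_iff.mp hd) h1.symm

private lemma hc_totalDegree_le [CommSemiring R] (n : ℕ) (p : MvPolynomial σ R) :
    (homogeneousComponent n p).totalDegree ≤ n :=
  (homogeneousComponent_isHomogeneous n p).totalDegree_le

private lemma sub_hc_top [CommRing R] (p : MvPolynomial σ R) :
    p - homogeneousComponent p.totalDegree p = 0 ∨
      (p - homogeneousComponent p.totalDegree p).totalDegree < p.totalDegree := by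
  set D := p.totalDegree with hD
  set q := p - homogeneousComponent D p with hq
  have hcoeff : ∀ d : σ →₀ ℕ, coeff d q = if d.degree = D then 0 else coeff d p := by
    intro d
    rw [hq, coeff_sub, coeff_homogeneousComponent]
    split <;> ring
  by_cases hq0 : q = 0
  · exact Or.inl hq0
  · right
    have hsupp : ∀ d ∈ q.support, d.degree < D := by
      intro d hd
      have hne := mem_support_iff.mp hd
      rw [hcoeff d] at hne
      by_cases hdd : d.degree = D
      · rw [if_pos hdd] at hne; exact absurd rfl hne
      · rw [if_neg hdd] at hne
        have : d ∈ p.support := mem_support_iff.mpr hne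
        exact lt_of_le_of_ne (degree_le_of_mem_support this) hdd
    obtain ⟨d, hd, hdeg⟩ := exists_degree_eq_totalDegree hq0
    rw [← hdeg]
    exact hsupp d hd

private lemma hc_top_mul [CommRing R] (p q : MvPolynomial σ R) :
    homogeneousComponent (p.totalDegree + q.totalDegree) (p * q) =
      homogeneousComponent p.totalDegree p * homogeneousComponent q.totalDegree q := by
  have hsplit : p * q = homogeneousComponent p.totalDegree p * homogeneousComponent q.totalDegree q
      + (homogeneousComponent p.totalDegree p * (q - homogeneousComponent q.totalDegree q)
        + ((p - homogeneousComponent p.totalDegree p) * homogeneousComponent q.totalDegree q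
          + (p - homogeneousComponent p.totalDegree p) * (q - homogeneousComponent q.totalDegree q))) := by
    ring
  have hPle := hc_totalDegree_le p.totalDegree p
  have hQle := hc_totalDegree_le q.totalDegree q
  have hPQ : homogeneousComponent (p.totalDegree + q.totalDegree)
      (homogeneousComponent p.totalDegree p * homogeneousComponent q.totalDegree q) =
      homogeneousComponent p.totalDegree p * homogeneousComponent q.totalDegree q := by
    have hmem : homogeneousComponent p.totalDegree p * homogeneousComponent q.totalDegree q
        ∈ homogeneousSubmodule σ R (p.totalDegree + q.totalDegree) := by
      rw [mem_homogeneousSubmodule]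
      exact (homogeneousComponent_isHomogeneous p.totalDegree p).mul
        (homogeneousComponent_isHomogeneous q.totalDegree q)
    rw [homogeneousComponent_of_mem hmem, if_pos rfl]
  have h1 : homogeneousComponent (p.totalDegree + q.totalDegree)
      (homogeneousComponent p.totalDegree p * (q - homogeneousComponent q.totalDegree q)) = 0 := by
    rcases sub_hc_top q with h | h
    · rw [h, mul_zero, map_zero]
    · refine homogeneousComponent_eq_zero _ _ ?_
      have hm := totalDegree_mul (homogeneousComponent p.totalDegree p)
        (q - homogeneousComponent q.totalDegree q)
      omega
  have h2 : homogeneousComponent (p.totalDegree + q.totalDegree)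
      ((p - homogeneousComponent p.totalDegree p) * homogeneousComponent q.totalDegree q) = 0 := by
    rcases sub_hc_top p with h | h
    · rw [h, zero_mul, map_zero]
    · refine homogeneousComponent_eq_zero _ _ ?_
      have hm := totalDegree_mul (p - homogeneousComponent p.totalDegree p)
        (homogeneousComponent q.totalDegree q)
      omega
  have h3 : homogeneousComponent (p.totalDegree + q.totalDegree)
      ((p - homogeneousComponent p.totalDegree p) * (q - homogeneousComponent q.totalDegree q)) = 0 := by
    rcases sub_hc_top p with h | h
    · rw [h, zero_mul, map_zero]
    · rcases sub_hc_top q with h' | h'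
      · rw [h', mul_zero, map_zero]
      · refine homogeneousComponent_eq_zero _ _ ?_
        have hm := totalDegree_mul (p - homogeneousComponent p.totalDegree p)
          (q - homogeneousComponent q.totalDegree q)
        omega
  rw [hsplit, map_add, map_add, map_add, hPQ, h1, h2, h3]
  ring

private lemma totalDegree_mul_eq [CommRing R] [IsDomain R] {p q : MvPolynomial σ R}
    (hp : p ≠ 0) (hq : q ≠ 0) :
    (p * q).totalDegree = p.totalDegree + q.totalDegree := by
  refine le_antisymm (totalDegree_mul _ _) ?_
  by_contra hlt
  push_neg at hlt
  have h0 : homogeneousComponent (p.totalDegree + q.totalDegree) (p * q) = 0 :=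
    homogeneousComponent_eq_zero _ _ hlt
  rw [hc_top_mul] at h0
  exact mul_ne_zero (hc_top_ne_zero hp) (hc_top_ne_zero hq) h0

private lemma coeff_eq_zero_of_isUnit [CommRing R] [IsDomain R] {p : MvPolynomial σ R}
    (h : IsUnit p) {k : σ →₀ ℕ} (hk : k ≠ 0) : coeff k p = 0 := by
  obtain ⟨q, hq⟩ := isUnit_iff_exists_inv.mp h
  have hp0 : p ≠ 0 := fun h0 => by simp [h0] at hq
  have hq0 : q ≠ 0 := fun h0 => by simp [h0] at hq
  have hdeg : p.totalDegree + q.totalDegree = 0 := by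
    rw [← totalDegree_mul_eq hp0 hq0, hq, totalDegree_one]
  have hpd : p.totalDegree = 0 := by omega
  by_contra hne
  have hmem : k ∈ p.support := mem_support_iff.mpr hne
  have := (totalDegree_eq_zero_iff σ p).mp hpd k hmem
  exact hk (Finsupp.ext fun x => this x)

private lemma hc_map {S : Type*} [CommSemiring R] [CommSemiring S] (φ : R →+* S)
    (n : ℕ) (p : MvPolynomial σ R) :
    homogeneousComponent n (map φ p) = map φ (homogeneousComponent n p) := by
  ext d
  rw [coeff_homogeneousComponent, coeff_map, coeff_map, coeff_homogeneousComponent,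
    apply_ite φ, map_zero]

private lemma eq_C_of_totalDegree_eq_zero [CommSemiring R] {p : MvPolynomial σ R}
    (h : p.totalDegree = 0) : p = C (coeff 0 p) := by
  classical
  ext d
  by_cases hd : d = 0
  · subst hd; simp
  · rw [coeff_C, if_neg (Ne.symm hd)]
    by_contra hne
    have hmem : d ∈ p.support := mem_support_iff.mpr hne
    have := (totalDegree_eq_zero_iff σ p).mp h d hmem
    exact hd (Finsupp.ext fun x => this x)

private lemma totalDegree_map_of_injective {S : Type*} [CommSemiring R] [CommSemiring S]
    (φ : R →+* S) (hφ : Function.Injective φ) (p : MvPolynomial σ R) :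
    (map φ p).totalDegree = p.totalDegree := by
  rw [totalDegree, totalDegree, support_map_of_injective _ hφ]

end Helpers

section Key

variable {K : Type*} [Field K] {σ τ : Type*}

/-- The key algebraic fact: over a field `K`, with `S = K[Y]`, the polynomial
`f(X)·g(Y) + c` viewed in `S[X]` is irreducible when `f, g` are non-constant,
`c ≠ 0` and `g` is squarefree. -/
private theorem key_irreducible (f : MvPolynomial σ K) (g : MvPolynomial τ K) (c : K)
    (hf : 0 < f.totalDegree) (hg : 0 < g.totalDegree) (hc : c ≠ 0)
    (hsf : Squarefree g) :
    Irreducible ((map (C : K →+* MvPolynomial τ K) f) * C g + C (C c) :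
      MvPolynomial σ (MvPolynomial τ K)) := by
  classical
  -- basic nonvanishing facts
  have hf0 : f ≠ 0 := fun h0 => by simp [h0] at hf
  have hg0 : g ≠ 0 := fun h0 => by simp [h0] at hg
  obtain ⟨kf, hkf_mem, hkf_deg⟩ := exists_degree_eq_totalDegree hf0
  have hkf : coeff kf f ≠ 0 := mem_support_iff.mp hkf_mem
  have hkf0 : kf ≠ 0 := by
    intro h0
    rw [h0, map_zero] at hkf_deg
    omega
  have hCkf : (C (coeff kf f) : MvPolynomial τ K) ≠ 0 := fun h0 =>
    hkf (C_injective τ K (by rw [h0, C_0]))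
  -- coefficients of h
  have hcoeff : ∀ k : σ →₀ ℕ,
      coeff k ((map (C : K →+* MvPolynomial τ K) f) * C g + C (C c)) =
      C (coeff k f) * g + (if k = 0 then C c else 0) := by
    intro k
    rw [coeff_add, mul_comm ((map (C : K →+* MvPolynomial τ K)) f) (C g), coeff_C_mul,
      coeff_map, coeff_C, mul_comm g (C (coeff k f))]
    simp [eq_comm]
  have hh_kf : coeff kf ((map (C : K →+* MvPolynomial τ K) f) * C g + C (C c)) =
      C (coeff kf f) * g := by
    rw [hcoeff, if_neg hkf0, add_zero]
  have hh_kf_ne : coeff kf ((map (C : K →+* MvPolynomial τ K) f) * C g + C (C c)) ≠ 0 := by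
    rw [hh_kf]; exact mul_ne_zero hCkf hg0
  have hh0 : ((map (C : K →+* MvPolynomial τ K) f) * C g + C (C c)) ≠ 0 := fun h0 =>
    hh_kf_ne (by rw [h0, coeff_zero])
  constructor
  · -- h is not a unit
    intro hu
    exact hh_kf_ne (coeff_eq_zero_of_isUnit hu hkf0)
  · rintro A B hAB
    by_contra hcon
    push_neg at hcon
    obtain ⟨hA, hB⟩ := hcon
    have hA0 : A ≠ 0 := fun h0 => hh0 (by rw [hAB, h0, zero_mul])
    have hB0 : B ≠ 0 := fun h0 => hh0 (by rw [hAB, h0, mul_zero])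
    -- no constant (in the coefficient ring) factor
    have hconst : ∀ s : MvPolynomial τ K, ∀ Q : MvPolynomial σ (MvPolynomial τ K),
        ((map (C : K →+* MvPolynomial τ K) f) * C g + C (C c)) = C s * Q →
        IsUnit (C s : MvPolynomial σ (MvPolynomial τ K)) := by
      intro s Q hEq
      have hdvd : ∀ k, s ∣ coeff k ((map (C : K →+* MvPolynomial τ K) f) * C g + C (C c)) :=
        fun k => ⟨coeff k Q, by rw [hEq, coeff_C_mul]⟩
      have h1 : s ∣ g := by
        obtain ⟨t, ht⟩ := hdvd kf
        rw [hh_kf] at ht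
        have hu : IsUnit (C (coeff kf f) : MvPolynomial τ K) :=
          (isUnit_iff_ne_zero.mpr hkf).map (C : K →+* MvPolynomial τ K)
        obtain ⟨v, hv⟩ := isUnit_iff_exists_inv.mp hu
        refine ⟨v * t, ?_⟩
        calc g = (C (coeff kf f) * v) * g := by rw [hv, one_mul]
          _ = v * (C (coeff kf f) * g) := by ring
          _ = v * (s * t) := by rw [ht]
          _ = s * (v * t) := by ring
      have h2 : s ∣ C c := by
        have h0' := hdvd 0
        rw [hcoeff, if_pos rfl] at h0'
        have hd : s ∣ C (coeff 0 f) * g := Dvd.dvd.mul_left h1 _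
        exact (dvd_add_right hd).mp h0'
      have hsu : IsUnit s :=
        isUnit_of_dvd_unit h2 ((isUnit_iff_ne_zero.mpr hc).map (C : K →+* MvPolynomial τ K))
      exact hsu.map (C : MvPolynomial τ K →+* MvPolynomial σ (MvPolynomial τ K))
    have hdA : 0 < A.totalDegree := by
      by_contra hd
      push_neg at hd
      have h0 : A.totalDegree = 0 := by omega
      have hAC := eq_C_of_totalDegree_eq_zero h0
      refine hA ?_
      rw [hAC]
      exact hconst (coeff 0 A) B (by rw [hAB]; exact congrArg (fun z => z * B) hAC)
    have hdB : 0 < B.totalDegree := by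
      by_contra hd
      push_neg at hd
      have h0 : B.totalDegree = 0 := by omega
      have hBC := eq_C_of_totalDegree_eq_zero h0
      refine hB ?_
      rw [hBC]
      refine hconst (coeff 0 B) A ?_
      rw [hAB]
      exact (mul_comm A B).trans (congrArg (fun z => z * A) hBC)
    -- total degree of h equals totalDegree of f
    have hmapf0 : (map (C : K →+* MvPolynomial τ K) f) ≠ 0 := by
      intro h0
      have hco := congrArg (coeff kf) h0
      rw [coeff_map, coeff_zero] at hco
      exact hCkf hco
    have htd_map : (map (C : K →+* MvPolynomial τ K) f).totalDegree = f.totalDegree :=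
      totalDegree_map_of_injective _ (C_injective τ K) f
    have hNf : ((map (C : K →+* MvPolynomial τ K) f) * C g + C (C c)).totalDegree
        = f.totalDegree := by
      refine le_antisymm ?_ ?_
      · refine le_trans (totalDegree_add _ _) ?_
        have hCg0 : (C g : MvPolynomial σ (MvPolynomial τ K)) ≠ 0 := fun h0 =>
          hg0 (C_injective σ (MvPolynomial τ K) (by rw [h0, C_0]))
        have hmul : ((map (C : K →+* MvPolynomial τ K) f) * C g).totalDegree
            = f.totalDegree := by
          rw [totalDegree_mul_eq hmapf0 hCg0, totalDegree_C, add_zero, htd_map]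
        rw [hmul, totalDegree_C]
        omega
      · have hmem : kf ∈ ((map (C : K →+* MvPolynomial τ K) f) * C g + C (C c)).support :=
          mem_support_iff.mpr hh_kf_ne
        have hle := degree_le_of_mem_support hmem
        omega
    have hABdeg : A.totalDegree + B.totalDegree = f.totalDegree := by
      rw [← hNf, hAB, totalDegree_mul_eq hA0 hB0]
    -- top homogeneous parts
    have hfhat0 : homogeneousComponent f.totalDegree f ≠ 0 := hc_top_ne_zero hf0
    have hstar : homogeneousComponent A.totalDegree A * homogeneousComponent B.totalDegree B
        = map (C : K →+* MvPolynomial τ K) (homogeneousComponent f.totalDegree f) * C g := by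
      have e1 : homogeneousComponent A.totalDegree A * homogeneousComponent B.totalDegree B
          = homogeneousComponent f.totalDegree (A * B) := by
        rw [← hABdeg, hc_top_mul]
      have e3 : homogeneousComponent f.totalDegree
            ((map (C : K →+* MvPolynomial τ K) f) * C g + C (C c)) =
          C g * homogeneousComponent f.totalDegree (map (C : K →+* MvPolynomial τ K) f) := by
        rw [mul_comm ((map (C : K →+* MvPolynomial τ K)) f) (C g), map_add,
          homogeneousComponent_C_mul,
          homogeneousComponent_eq_zero f.totalDegree
            (C (C c) : MvPolynomial σ (MvPolynomial τ K)) (by rw [totalDegree_C]; omega),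
          add_zero]
      rw [e1, ← hAB, e3, hc_map, mul_comm]
    -- pick an irreducible factor r of g
    have hgu : ¬IsUnit g := by
      intro hu
      obtain ⟨kg, hkg_mem, hkg_deg⟩ := exists_degree_eq_totalDegree hg0
      have hkg0 : kg ≠ 0 := by
        intro h0
        rw [h0, map_zero] at hkg_deg
        omega
      exact (mem_support_iff.mp hkg_mem) (coeff_eq_zero_of_isUnit hu hkg0)
    obtain ⟨r, hr, hrg⟩ := WfDvdMonoid.exists_irreducible_factor hgu hg0
    have hrP : Prime r := UniqueFactorizationMonoid.irreducible_iff_prime.mp hr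
    have hr0 : r ≠ 0 := hrP.ne_zero
    have hCrP : Prime (C r : MvPolynomial σ (MvPolynomial τ K)) :=
      (MvPolynomial.prime_C_iff σ).mpr hrP
    have hCr0 : (C r : MvPolynomial σ (MvPolynomial τ K)) ≠ 0 := fun h0 =>
      hr0 (C_injective σ (MvPolynomial τ K) (by rw [h0, C_0]))
    -- C r does not divide map C fhat
    have hND : ¬ ((C r : MvPolynomial σ (MvPolynomial τ K)) ∣
        map (C : K →+* MvPolynomial τ K) (homogeneousComponent f.totalDegree f)) := by
      rintro ⟨t, ht⟩
      obtain ⟨k0, hk0⟩ := ne_zero_iff.mp hfhat0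
      have e : C (coeff k0 (homogeneousComponent f.totalDegree f)) = r * coeff k0 t := by
        have hco := congrArg (coeff k0) ht
        rwa [coeff_map, coeff_C_mul] at hco
      have hdvd : r ∣ (C (coeff k0 (homogeneousComponent f.totalDegree f)) :
          MvPolynomial τ K) := ⟨coeff k0 t, e⟩
      exact hr.not_isUnit
        (isUnit_of_dvd_unit hdvd ((isUnit_iff_ne_zero.mpr hk0).map (C : K →+* MvPolynomial τ K)))
    -- C r cannot divide both top parts
    have hor : ¬ ((C r : MvPolynomial σ (MvPolynomial τ K)) ∣
          homogeneousComponent A.totalDegree A) ∨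
        ¬ ((C r : MvPolynomial σ (MvPolynomial τ K)) ∣ homogeneousComponent B.totalDegree B) := by
      by_contra hcc
      push_neg at hcc
      obtain ⟨⟨A1, hA1⟩, ⟨B1, hB1⟩⟩ := hcc
      obtain ⟨g1, hg1⟩ := hrg
      have hstar' : (C r : MvPolynomial σ (MvPolynomial τ K)) * (C r * (A1 * B1)) =
          C r * (map (C : K →+* MvPolynomial τ K) (homogeneousComponent f.totalDegree f)
            * C g1) := by
        calc (C r : MvPolynomial σ (MvPolynomial τ K)) * (C r * (A1 * B1))
            = (C r * A1) * (C r * B1) := by ring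
          _ = homogeneousComponent A.totalDegree A * homogeneousComponent B.totalDegree B := by
              rw [← hA1, ← hB1]
          _ = map (C : K →+* MvPolynomial τ K) (homogeneousComponent f.totalDegree f) * C g :=
              hstar
          _ = map (C : K →+* MvPolynomial τ K) (homogeneousComponent f.totalDegree f) *
              (C r * C g1) := by rw [hg1, map_mul]
          _ = C r * (map (C : K →+* MvPolynomial τ K) (homogeneousComponent f.totalDegree f)
              * C g1) := by ring
      have hcancel := mul_left_cancel₀ hCr0 hstar'
      have hdvd : (C r : MvPolynomial σ (MvPolynomial τ K)) ∣
          map (C : K →+* MvPolynomial τ K) (homogeneousComponent f.totalDegree f) * C g1 :=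
        ⟨A1 * B1, hcancel.symm⟩
      rcases hCrP.2.2 _ _ hdvd with h' | h'
      · exact hND h'
      · obtain ⟨t, ht⟩ := h'
        have hg1r : g1 = r * coeff 0 t := by
          have hco := congrArg (coeff 0) ht
          rwa [coeff_C, if_pos rfl, coeff_C_mul] at hco
        refine hr.not_isUnit (hsf r ⟨coeff 0 t, ?_⟩)
        rw [hg1, hg1r]
        ring
    -- pass to the quotient mod r
    have hIP : (Ideal.span {r} : Ideal (MvPolynomial τ K)).IsPrime :=
      (Ideal.span_singleton_prime hr0).mpr hrP
    haveI := hIP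
    have hqg : Ideal.Quotient.mk (Ideal.span {r}) g = 0 :=
      Ideal.Quotient.eq_zero_iff_mem.mpr (Ideal.mem_span_singleton.mpr hrg)
    have hΦh : map (Ideal.Quotient.mk (Ideal.span {r}))
          ((map (C : K →+* MvPolynomial τ K) f) * C g + C (C c)) =
        C (Ideal.Quotient.mk (Ideal.span {r}) (C c)) := by
      rw [RingHom.map_add, RingHom.map_mul, MvPolynomial.map_C, MvPolynomial.map_C, hqg,
        MvPolynomial.C_0, mul_zero, zero_add]
    have hunit : IsUnit (C (Ideal.Quotient.mk (Ideal.span {r}) (C c)) :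
        MvPolynomial σ (MvPolynomial τ K ⧸ Ideal.span {r})) := by
      refine IsUnit.map (C : _ →+* MvPolynomial σ (MvPolynomial τ K ⧸ Ideal.span {r})) ?_
      refine IsUnit.map (Ideal.Quotient.mk (Ideal.span {r})) ?_
      exact (isUnit_iff_ne_zero.mpr hc).map (C : K →+* MvPolynomial τ K)
    have hΦAB : map (Ideal.Quotient.mk (Ideal.span {r})) A *
        map (Ideal.Quotient.mk (Ideal.span {r})) B =
        C (Ideal.Quotient.mk (Ideal.span {r}) (C c)) := by
      rw [← RingHom.map_mul, ← hAB, hΦh]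
    have hUA : IsUnit (map (Ideal.Quotient.mk (Ideal.span {r})) A) :=
      isUnit_of_mul_isUnit_left (hΦAB ▸ hunit)
    have hUB : IsUnit (map (Ideal.Quotient.mk (Ideal.span {r})) B) :=
      isUnit_of_mul_isUnit_right (hΦAB ▸ hunit)
    -- final contradiction
    have final : ∀ P : MvPolynomial σ (MvPolynomial τ K), 0 < P.totalDegree →
        ¬ ((C r : MvPolynomial σ (MvPolynomial τ K)) ∣
          homogeneousComponent P.totalDegree P) →
        IsUnit (map (Ideal.Quotient.mk (Ideal.span {r})) P) → False := by
      intro P hdP hnd hu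
      have hnall : ¬ ∀ k, r ∣ coeff k (homogeneousComponent P.totalDegree P) :=
        fun hall => hnd ((C_dvd_iff_dvd_coeff r _).mpr hall)
      push_neg at hnall
      obtain ⟨k, hk⟩ := hnall
      have hdeg : k.degree = P.totalDegree := by
        by_contra hne
        rw [coeff_homogeneousComponent, if_neg hne] at hk
        exact hk (dvd_zero r)
      rw [coeff_homogeneousComponent, if_pos hdeg] at hk
      have hk0 : k ≠ 0 := by
        intro h0
        rw [h0, map_zero] at hdeg
        omega
      have hz := coeff_eq_zero_of_isUnit hu hk0
      rw [coeff_map] at hz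
      exact hk (Ideal.mem_span_singleton.mp (Ideal.Quotient.eq_zero_iff_mem.mp hz))
    rcases hor with hnd | hnd
    · exact final A hdA hnd hUA
    · exact final B hdB hnd hUB

end Key

section Transport

variable {R : Type*} [CommSemiring R] {σ τ : Type*}

private lemma sumToIter_rename_inl (p : MvPolynomial σ R) :
    sumToIter R σ τ (rename Sum.inl p) = map (C : R →+* MvPolynomial τ R) p := by
  induction p using MvPolynomial.induction_on with
  | C a => rw [rename_C, sumToIter_C, map_C]
  | add p q hp hq => rw [map_add, map_add, hp, hq, map_add]
  | mul_X p i hp => simp only [map_mul, rename_X, sumToIter_Xl, map_X, hp]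

private lemma sumToIter_rename_inr (p : MvPolynomial τ R) :
    sumToIter R σ τ (rename Sum.inr p) = C p := by
  induction p using MvPolynomial.induction_on with
  | C a => rw [rename_C, sumToIter_C]
  | add p q hp hq => rw [map_add, map_add, hp, hq, map_add]
  | mul_X p i hp => simp only [map_mul, rename_X, sumToIter_Xr, hp, C_mul]

end Transport

/-- If `f ∈ F[X₁,…,Xₙ]` and `g ∈ F[Y₁,…,Yₘ]` are non-constant,
`c ∈ F` is nonzero, and `g` is square-free over the algebraic closure of `F`,
then `h(X,Y) = f(X)·g(Y) + c` (viewed in `F[X₁,…,Xₙ,Y₁,…,Yₘ]` via renaming into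
disjoint sets of variables) is absolutely irreducible, i.e. irreducible over the
algebraic closure of `F`. -/
theorem fg_plus_const_absolutely_irreducible {F : Type*} [Field F] {n m : ℕ}
    (f : MvPolynomial (Fin n) F) (g : MvPolynomial (Fin m) F) (c : F)
    (hf : 0 < f.totalDegree) (hg : 0 < g.totalDegree) (hc : c ≠ 0)
    (hsf : Squarefree (MvPolynomial.map (algebraMap F (AlgebraicClosure F)) g)) :
    Irreducible (MvPolynomial.map (algebraMap F (AlgebraicClosure F))
      ((MvPolynomial.rename (Sum.inl : Fin n → Fin n ⊕ Fin m) f) *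
        (MvPolynomial.rename (Sum.inr : Fin m → Fin n ⊕ Fin m) g) + MvPolynomial.C c)) := by
  classical
  set K := AlgebraicClosure F with hK
  set φ := algebraMap F K with hφ
  have hφinj : Function.Injective φ := φ.injective
  set f' := MvPolynomial.map φ f with hf'_def
  set g' := MvPolynomial.map φ g with hg'_def
  have hmap : MvPolynomial.map φ
      ((rename (Sum.inl : Fin n → Fin n ⊕ Fin m) f) *
        (rename (Sum.inr : Fin m → Fin n ⊕ Fin m) g) + C c) =
      (rename Sum.inl f') * (rename Sum.inr g') + C (φ c) := by
    rw [map_add, map_mul, map_rename, map_rename, MvPolynomial.map_C]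
  rw [hmap]
  have hf' : 0 < f'.totalDegree := by
    rw [hf'_def, totalDegree_map_of_injective φ hφinj]
    exact hf
  have hg' : 0 < g'.totalDegree := by
    rw [hg'_def, totalDegree_map_of_injective φ hφinj]
    exact hg
  have hc' : φ c ≠ 0 := fun h0 => hc (hφinj (by rw [h0, map_zero]))
  let e := MvPolynomial.sumAlgEquiv K (Fin n) (Fin m)
  rw [← MulEquiv.irreducible_iff (e.toMulEquiv)]
  have he : e.toMulEquiv ((rename Sum.inl f') * (rename Sum.inr g') + C (φ c)) =
      (MvPolynomial.map (C : K →+* MvPolynomial (Fin m) K) f') * C g' + C (C (φ c)) := by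
    show e ((rename Sum.inl f') * (rename Sum.inr g') + C (φ c)) = _
    have h1 : e ((rename Sum.inl f') * (rename Sum.inr g') + C (φ c)) =
        e (rename Sum.inl f') * e (rename Sum.inr g') + e (C (φ c)) := by
      rw [map_add, map_mul]
    rw [h1]
    have h2 : e (rename Sum.inl f') = MvPolynomial.map (C : K →+* MvPolynomial (Fin m) K) f' :=
      by have := DFunLike.congr_fun (sumAlgEquiv_comp_rename_inl (R := K) (S₁ := Fin n) (S₂ := Fin m)) f'; exact this
    have h3 : e (rename Sum.inr g') = C g' := by have := DFunLike.congr_fun (sumAlgEquiv_comp_rename_inr (R := K) (S₁ := Fin n) (S₂ := Fin m)) g'; exact this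
    have h4 : e (C (φ c)) = C (C (φ c)) := sumAlgEquiv_C_inl _ _ _ _
    rw [h2, h3, h4]
  rw [he]
  exact key_irreducible f' g' (φ c) hf' hg' hc' hsf
end

section
/- Let (F, v) be a discretely valued field, e ≥ 1 an integer, π ∈ F with 0 < v(π) ≤ e, and a ∈ F with v(a) < 0. Then for every x ∈ F, v(a·π·x^{2^e} − x + a) ≤ v(a). In particular, if v(a·π·x^{2^e} − x + a) ≥ 0 for some x ∈ F, then v(a) ≥ 0. -/
/-- Let `(F, v)` be a discretely valued field, `e ≥ 1`, `π ∈ F` with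
`0 < v(π) ≤ e`, and `a ∈ F` with `v(a) < 0`. Then for every `x ∈ F`,
`v(a·π·x^{2^e} − x + a) ≤ v(a)`; in particular, if `v(a·π·x^{2^e} − x + a) ≥ 0` for
some `x`, then `v(a) ≥ 0`. -/
theorem val_D_le {F : Type*} [Field F] (v : AddValuation F (WithTop ℤ))
    (e : ℕ) (he : 1 ≤ e) (π : F)
    (hπ0 : 0 < v π) (hπe : v π ≤ ((e : ℤ) : WithTop ℤ)) :
    ∀ a : F, (v a < 0 → ∀ x : F, v (a * π * x ^ 2 ^ e - x + a) ≤ v a) ∧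
      (∀ x : F, 0 ≤ v (a * π * x ^ 2 ^ e - x + a) → 0 ≤ v a) := by
  have key : ∀ a : F, v a < 0 → ∀ x : F, v (a * π * x ^ 2 ^ e - x + a) ≤ v a := by
    intro a ha x
    -- extract integer values
    obtain ⟨na, hna⟩ : ∃ n : ℤ, v a = (n : WithTop ℤ) := by
      cases h : v a with
      | top => rw [h] at ha; exact absurd ha (by simp)
      | coe n => exact ⟨n, rfl⟩
    obtain ⟨np, hnp⟩ : ∃ n : ℤ, v π = (n : WithTop ℤ) := by
      cases h : v π with
      | top => rw [h] at hπe; exact absurd hπe (by simp)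
      | coe n => exact ⟨n, rfl⟩
    have hna0 : na < 0 := by rwa [hna, ← WithTop.coe_zero, WithTop.coe_lt_coe] at ha
    have hnp1 : 1 ≤ np := by
      rw [hnp, ← WithTop.coe_zero, WithTop.coe_lt_coe] at hπ0; omega
    have hnpe : np ≤ (e : ℤ) := by rwa [hnp, WithTop.coe_le_coe] at hπe
    have hvb : v (a * π * x ^ 2 ^ e) = (na : WithTop ℤ) + np + (2 ^ e) • v x := by
      rw [v.map_mul, v.map_mul, v.map_pow, hna, hnp]
    rcases le_or_gt 0 (v x) with hx | hx
    · -- v x ≥ 0 : the valuation equals v a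
      have hb : v a < v (a * π * x ^ 2 ^ e) := by
        rw [hvb, hna]
        calc (na : WithTop ℤ) < ((na + np : ℤ) : WithTop ℤ) := by
              rw [WithTop.coe_lt_coe]; omega
          _ = (na : WithTop ℤ) + np := by rw [← WithTop.coe_add]
          _ ≤ (na : WithTop ℤ) + np + (2 ^ e) • v x :=
              le_add_of_nonneg_right (nsmul_nonneg hx _)
      have hbx : v a < v (a * π * x ^ 2 ^ e - x) := by
        refine lt_of_lt_of_le (lt_min hb (lt_of_lt_of_le ha hx)) ?_
        exact v.map_sub _ _
      rw [v.map_add_eq_of_lt_right hbx]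
    · -- v x < 0
      obtain ⟨nx, hnx⟩ : ∃ n : ℤ, v x = (n : WithTop ℤ) := by
        cases h : v x with
        | top => rw [h] at hx; exact absurd hx (by simp)
        | coe n => exact ⟨n, rfl⟩
      have hnx0 : nx < 0 := by rwa [hnx, ← WithTop.coe_zero, WithTop.coe_lt_coe] at hx
      have h2e : (e : ℤ) + 1 ≤ 2 ^ e := by exact_mod_cast Nat.lt_two_pow_self (n := e)
      have hvb' : v (a * π * x ^ 2 ^ e) = ((na + np + 2 ^ e * nx : ℤ) : WithTop ℤ) := by
        rw [hvb, hnx, ← WithTop.coe_nsmul, ← WithTop.coe_add, ← WithTop.coe_add,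
          WithTop.coe_inj, nsmul_eq_mul]
        push_cast
        ring
      have hblt : v (a * π * x ^ 2 ^ e) < v x := by
        rw [hvb', hnx, WithTop.coe_lt_coe]; nlinarith
      have hba : v (a * π * x ^ 2 ^ e) < v a := by
        rw [hvb', hna, WithTop.coe_lt_coe]; nlinarith
      have h1 : v (a * π * x ^ 2 ^ e - x) = v (a * π * x ^ 2 ^ e) :=
        v.map_sub_eq_of_lt_left hblt
      calc v (a * π * x ^ 2 ^ e - x + a) = v (a * π * x ^ 2 ^ e - x) :=
            v.map_add_eq_of_lt_left (by rw [h1]; exact hba)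
        _ = v (a * π * x ^ 2 ^ e) := h1
        _ ≤ v a := hba.le
  intro a
  refine ⟨key a, fun x h0 => ?_⟩
  by_contra h
  push_neg at h
  exact absurd (le_trans h0 (key a h x)) (by simpa using h)
end

section
/- Let (F, v) be a valued field with ring of integers O_v, let d ≥ 1, and suppose the residue field of v is a finite field 𝔽_{p^f} with d not dividing f. Then for every x ∈ F, v(Φ_{p^d−1}(x)) ≤ 0, where Φ_{p^d−1} is the (p^d−1)-th cyclotomic polynomial. -/
open Polynomial

/-- If `p ^ d - 1 ∣ p ^ f - 1` with `2 ≤ p`, then `d ∣ f`. -/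
lemma dvd_of_pow_sub_one_dvd {p d : ℕ} (hp : 2 ≤ p) (hd : 0 < d) :
    ∀ f, p ^ d - 1 ∣ p ^ f - 1 → d ∣ f := by
  intro f
  induction f using Nat.strong_induction_on with
  | _ f ih =>
    intro h
    rcases lt_or_ge f d with hfd | hdfle
    · have hlt : p ^ f - 1 < p ^ d - 1 := by
        have h1 := Nat.pow_lt_pow_right (by omega : 1 < p) hfd
        have h2 := Nat.one_le_pow f p (by omega)
        omega
      have h0 := Nat.eq_zero_of_dvd_of_lt h hlt
      have hpf := Nat.one_le_pow f p (by omega : 0 < p)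
      have hf0 : p ^ f = 1 := by omega
      have : f = 0 := by
        by_contra hne
        have : p ^ 1 ≤ p ^ f := Nat.pow_le_pow_right (by omega) (by omega)
        simp only [pow_one] at this; omega
      simp [this]
    · have key : p ^ d - 1 ∣ p ^ (f - d) - 1 := by
        have h2 : p ^ (f - d) * p ^ d = p ^ f := by
          rw [← pow_add]; congr 1; omega
        have h3 : 1 ≤ p ^ (f - d) := Nat.one_le_pow _ _ (by omega)
        have h4 : 1 ≤ p ^ d := Nat.one_le_pow _ _ (by omega)
        have heq : p ^ f - 1 = p ^ (f - d) * (p ^ d - 1) + (p ^ (f - d) - 1) := by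
          have hm : p ^ (f - d) * (p ^ d - 1) = p ^ f - p ^ (f - d) := by
            rw [Nat.mul_sub, h2, mul_one]
          have h5 : p ^ (f - d) ≤ p ^ f := by nlinarith
          omega
        have hdvd : p ^ d - 1 ∣ p ^ (f - d) * (p ^ d - 1) :=
          dvd_mul_left _ _
        have := Nat.dvd_sub h hdvd
        rwa [heq, Nat.add_sub_cancel_left] at this
      rcases Nat.eq_or_lt_of_le hdfle with heq | hlt2
      · exact heq ▸ dvd_refl d
      · have hrec := ih (f - d) (by omega) key
        have := Nat.dvd_add hrec (dvd_refl d)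
        rwa [Nat.sub_add_cancel hdfle] at this

/-- A valuation subring satisfies `Valuation.Integers` for its own valuation. -/
lemma valuationSubring_integers {F : Type*} [Field F] (O : ValuationSubring F) :
    Valuation.Integers O.valuation O where
  hom_inj := Subtype.coe_injective
  map_le_one := O.valuation_le_one
  exists_of_le_one := fun {r} hr => ⟨⟨r, O.mem_of_valuation_le_one r hr⟩, rfl⟩

/-- Let `(F, v)` be a valued field with valuation ring `O` whose residue
field is finite of characteristic `p`, of cardinality `p^f`, and let `d ≥ 1` with `d ∤ f`.
Then for every `x ∈ F` one has `v(Φ_{p^d−1}(x)) ≤ 0`, where `Φ_{p^d−1}` is the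
`(p^d−1)`-th cyclotomic polynomial; that is, `Φ_{p^d−1}(x)` is nonzero and its inverse
lies in `O`. -/
theorem val_cyclotomic_nonpos {F : Type*} [Field F]
    (O : ValuationSubring F) (p d f : ℕ) (hp : p.Prime) (hd : 0 < d) (hf : 0 < f)
    (hchar : CharP (IsLocalRing.ResidueField O) p)
    (hcard : Nat.card (IsLocalRing.ResidueField O) = p ^ f)
    (hdf : ¬ d ∣ f) :
    ∀ x : F, (Polynomial.cyclotomic (p ^ d - 1) F).eval x ≠ 0 ∧
      ((Polynomial.cyclotomic (p ^ d - 1) F).eval x)⁻¹ ∈ O := by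
  intro x
  set n := p ^ d - 1 with hn
  have hp2 : 2 ≤ p := hp.two_le
  have hpd : 2 ≤ p ^ d := by
    calc 2 ≤ p := hp2
    _ = p ^ 1 := (pow_one p).symm
    _ ≤ p ^ d := Nat.pow_le_pow_right (by omega) hd
  have hn1 : 1 ≤ n := by omega
  by_cases hx : x ∈ O
  · -- x in O; evaluate the cyclotomic over O
    set y : O := ⟨x, hx⟩ with hy
    set c : O := (cyclotomic n O).eval y with hc
    have hxy : x = algebraMap O F y := rfl
    have hcF : (c : F) = (cyclotomic n F).eval x := by
      rw [← map_cyclotomic n (algebraMap O F), eval_map, hxy, eval₂_at_apply]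
      rfl
    have hcunit : IsUnit c := by
      by_contra hnotunit
      have hmem : c ∈ IsLocalRing.maximalIdeal O := hnotunit
      set κ := IsLocalRing.ResidueField O with hκ
      set μ : κ := IsLocalRing.residue O y with hμ
      have hroot : (cyclotomic n κ).eval μ = 0 := by
        rw [← map_cyclotomic n (IsLocalRing.residue O), eval_map, hμ, eval₂_at_apply,
          ← hc]
        exact (IsLocalRing.residue_eq_zero_iff c).mpr hmem
      have hκfin : Finite κ := Nat.finite_of_card_ne_zero (by rw [hcard]; positivity)
      have : Fintype κ := Fintype.ofFinite κ
      have hne : NeZero (n : κ) := by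
        constructor
        intro h0
        have hpn : p ∣ n := (CharP.cast_eq_zero_iff κ p n).mp h0
        have hpp : p ∣ p ^ d := dvd_pow_self p (by omega)
        have h1 : p ∣ p ^ d - n := Nat.dvd_sub hpp hpn
        have h2 : p ^ d - n = 1 := by omega
        rw [h2] at h1
        have := Nat.le_of_dvd one_pos h1
        omega
      have hprim : IsPrimitiveRoot μ n := (isRoot_cyclotomic_iff (R := κ)).mp hroot
      have hμne : μ ≠ 0 := hprim.ne_zero (by omega)
      have hpow : μ ^ (Fintype.card κ - 1) = 1 :=
        FiniteField.pow_card_sub_one_eq_one μ hμne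
      have horder : orderOf μ ∣ Fintype.card κ - 1 := orderOf_dvd_of_pow_eq_one hpow
      rw [← hprim.eq_orderOf] at horder
      have hcard' : Fintype.card κ = p ^ f := by
        rw [← Nat.card_eq_fintype_card, hcard]
      rw [hcard'] at horder
      exact hdf (dvd_of_pow_sub_one_dvd hp2 hd f horder)
    obtain ⟨u, hu⟩ := hcunit
    have hinv : ((c : F))⁻¹ = (((u⁻¹ : Oˣ) : O) : F) := by
      have h1 : ((u⁻¹ : Oˣ) : O) * c = 1 := by rw [← hu]; exact_mod_cast u.inv_mul
      have h2 : (((u⁻¹ : Oˣ) : O) : F) * (c : F) = 1 := by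
        exact_mod_cast congrArg Subtype.val h1
      exact inv_eq_of_mul_eq_one_left h2
    constructor
    · rw [← hcF]
      intro h0
      have : c = 0 := Subtype.coe_injective h0
      exact u.ne_zero (by rw [hu, this])
    · rw [← hcF, hinv]
      exact SetLike.coe_mem _
  · -- x not in O: show Φ(x) ∉ O via integrality
    have hnotmem : (cyclotomic n F).eval x ∉ O := by
      intro hmem
      apply hx
      have hint : IsIntegral O x := by
        refine ⟨cyclotomic n O - C ⟨_, hmem⟩, ?_, ?_⟩
        · apply Polynomial.Monic.sub_of_left (cyclotomic.monic n O)
          calc (C (⟨_, hmem⟩ : O)).degree ≤ 0 := degree_C_le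
            _ < (cyclotomic n O).degree := by
                rw [degree_cyclotomic]
                exact_mod_cast Nat.totient_pos.mpr (by omega)
        · rw [eval₂_sub, eval₂_C]
          have : eval₂ (algebraMap O F) x (cyclotomic n O) = (cyclotomic n F).eval x := by
            rw [← eval_map, map_cyclotomic]
          rw [this]
          exact sub_self _
      have hmem' := (valuationSubring_integers O).mem_of_integral hint
      exact O.mem_of_valuation_le_one x hmem'
    constructor
    · intro h0; rw [h0] at hnotmem; exact hnotmem (zero_mem O)
    · rcases O.mem_or_inv_mem ((cyclotomic n F).eval x) with h | h
      · exact absurd h hnotmem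
      · exact h
end

section
/- Let (F, ≤) be an ordered field and a, u ∈ F with u ≠ 0. If there exist x, y ∈ F such that (y² + u²)·(1 + (x^{2^e} − π)·(x² + x + 2)·(x² − a)) = 1 + u², where π ∈ F satisfies π ≤ −1 and e ≥ 1, then a ≥ −u^{−2}. -/
/-- Let `(F, ≤)` be an ordered field, `e ≥ 1`, `π ∈ F` with `π ≤ −1`,
`a ∈ F` and `u ∈ F` with `u ≠ 0`. If there exist `x, y ∈ F` such that
`(y² + u²)·(1 + (x^{2^e} − π)·(x² + x + 2)·(x² − a)) = 1 + u²`, then `a ≥ −u⁻²`. -/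
theorem ge_neg_inv_sq_of_eq {F : Type*} [Field F] [LinearOrder F] [IsStrictOrderedRing F]
    (e : ℕ) (he : 1 ≤ e) (π a u : F) (hπ : π ≤ -1) (hu : u ≠ 0)
    (h : ∃ x y : F,
      (y ^ 2 + u ^ 2) * (1 + (x ^ 2 ^ e - π) * (x ^ 2 + x + 2) * (x ^ 2 - a)) = 1 + u ^ 2) :
    -(u ^ 2)⁻¹ ≤ a := by
  obtain ⟨x, y, hxy⟩ := h
  have hu2 : (0:F) < u ^ 2 := by positivity
  have hinv : (0:F) < (u ^ 2)⁻¹ := by positivity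
  have hxe : (0:F) ≤ x ^ 2 ^ e := by
    obtain ⟨k, rfl⟩ : ∃ k, e = k + 1 := ⟨e - 1, by omega⟩
    rw [pow_succ, pow_mul]
    positivity
  generalize hT : x ^ 2 ^ e = T at hxy hxe
  have h1 : (1:F) ≤ T - π := by linarith
  have h2 : (1:F) < x ^ 2 + x + 2 := by nlinarith [sq_nonneg (x + 1/2), sq_nonneg x]
  rcases le_or_gt (x ^ 2 - a) 0 with hc | hc
  · nlinarith [sq_nonneg x]
  · have hP : (1:F) ≤ (T - π) * (x ^ 2 + x + 2) := by nlinarith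
    have hQ : x ^ 2 - a ≤ (T - π) * (x ^ 2 + x + 2) * (x ^ 2 - a) := by
      have := mul_le_mul_of_nonneg_right hP hc.le
      linarith
    have key : u ^ 2 * (1 + (x ^ 2 - a)) ≤ 1 + u ^ 2 := by
      calc u ^ 2 * (1 + (x ^ 2 - a))
          ≤ u ^ 2 * (1 + (T - π) * (x ^ 2 + x + 2) * (x ^ 2 - a)) := by
            apply mul_le_mul_of_nonneg_left _ hu2.le
            linarith
        _ ≤ (y ^ 2 + u ^ 2) * (1 + (T - π) * (x ^ 2 + x + 2) * (x ^ 2 - a)) := by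
            apply mul_le_mul_of_nonneg_right _ (by linarith)
            linarith [sq_nonneg y]
        _ = 1 + u ^ 2 := hxy
    have hle : x ^ 2 - a ≤ (u ^ 2)⁻¹ := by
      rw [← one_div, le_div_iff₀ hu2]
      nlinarith
    linarith [sq_nonneg x]
end

section
/- Let F be a field, 𝒮 a set of valuations on F, and for each valuation w ∈ 𝒮 let O_w be its valuation ring. Fix π ∈ F with 0 < w(π) ≤ e for all w ∈ 𝒮 (e ≥ 1 a fixed integer, all w discrete normalized with ℤ convex in the value group). Then for all a, b ∈ F: {w ∈ 𝒮 : w(a) ≥ 0} ∩ {w ∈ 𝒮 : w(b) ≥ 0} = {w ∈ 𝒮 : w(a^{2^e} + π·b^{2^e}) ≥ 0}. -/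
private lemma withtop_nsmul_coe (n : ℕ) (m : ℤ) :
    n • ((m : WithTop ℤ)) = ((n * m : ℤ) : WithTop ℤ) := by
  induction n with
  | zero => simp
  | succ k ih =>
    rw [succ_nsmul, ih, ← WithTop.coe_add]
    congr 1
    push_cast
    ring

private lemma nsmul_top_eq_top (n : ℕ) (hn : 0 < n) : n • (⊤ : WithTop ℤ) = ⊤ := by
  cases n with
  | zero => omega
  | succ k => rw [succ_nsmul]; simp

private lemma neg_cases (x : WithTop ℤ) (hx : x < 0) : ∃ m : ℤ, x = (m : WithTop ℤ) ∧ m ≤ -1 := by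
  cases x with
  | top => simp at hx
  | coe m =>
    refine ⟨m, rfl, ?_⟩
    have : (m : WithTop ℤ) < ((0 : ℤ) : WithTop ℤ) := hx
    rw [WithTop.coe_lt_coe] at this
    omega

/-- Let `F` be a field, `𝒮` a set of (discrete, normalized) valuations on
`F`, `e ≥ 1`, and `π ∈ F` with `0 < w(π) ≤ e` for all `w ∈ 𝒮`. Then for all `a, b ∈ F`:
`{w ∈ 𝒮 : w(a) ≥ 0} ∩ {w ∈ 𝒮 : w(b) ≥ 0} = {w ∈ 𝒮 : w(a^{2^e} + π·b^{2^e}) ≥ 0}`. -/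
theorem H_inter_H {F : Type*} [Field F] (𝒮 : Set (AddValuation F (WithTop ℤ)))
    (e : ℕ) (he : 1 ≤ e) (π : F)
    (hπ : ∀ w ∈ 𝒮, 0 < w π ∧ w π ≤ ((e : ℤ) : WithTop ℤ)) :
    ∀ a b : F,
      ({w ∈ 𝒮 | 0 ≤ w a} ∩ {w ∈ 𝒮 | 0 ≤ w b}) =
        {w ∈ 𝒮 | 0 ≤ w (a ^ 2 ^ e + π * b ^ 2 ^ e)} := by
  intro a b
  have helt : (e : ℤ) < 2 ^ e := by
    have := Nat.lt_two_pow_self (n := e)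
    exact_mod_cast this
  ext w
  simp only [Set.mem_inter_iff, Set.mem_setOf_eq]
  constructor
  · rintro ⟨⟨hw, ha⟩, ⟨-, hb⟩⟩
    refine ⟨hw, ?_⟩
    obtain ⟨hp0, hpe⟩ := hπ w hw
    have hx : (0 : WithTop ℤ) ≤ w (a ^ 2 ^ e) := by
      rw [AddValuation.map_pow]
      exact nsmul_nonneg ha _
    have hy : (0 : WithTop ℤ) ≤ w (π * b ^ 2 ^ e) := by
      rw [AddValuation.map_mul, AddValuation.map_pow]
      have := nsmul_nonneg hb (2 ^ e)
      calc (0 : WithTop ℤ) ≤ 0 + 0 := by simp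
        _ ≤ w π + (2 ^ e) • w b := add_le_add hp0.le this
    exact AddValuation.map_le_add w hx hy
  · rintro ⟨hw, hsum⟩
    obtain ⟨hp0, hpe⟩ := hπ w hw
    refine ⟨⟨hw, ?_⟩, ⟨hw, ?_⟩⟩ <;> by_contra hneg <;> push_neg at hneg
    -- case w a < 0
    · obtain ⟨m, hm, hm1⟩ := neg_cases _ hneg
      have hx : w (a ^ 2 ^ e) = ((2 ^ e * m : ℤ) : WithTop ℤ) := by
        rw [AddValuation.map_pow, hm, withtop_nsmul_coe]
        norm_cast
      have hxneg : w (a ^ 2 ^ e) < 0 := by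
        rw [hx]
        exact_mod_cast (by nlinarith [pow_pos (by norm_num : (0:ℤ) < 2) e] : (2 ^ e * m : ℤ) < 0)
      by_cases hb : 0 ≤ w b
      · -- then w y ≥ 0 > w x
        have hy : (0 : WithTop ℤ) ≤ w (π * b ^ 2 ^ e) := by
          rw [AddValuation.map_mul, AddValuation.map_pow]
          calc (0 : WithTop ℤ) ≤ 0 + 0 := by simp
            _ ≤ w π + (2 ^ e) • w b := add_le_add hp0.le (nsmul_nonneg hb _)
        have := AddValuation.map_add_eq_of_lt_left w (lt_of_lt_of_le hxneg hy)
        rw [this] at hsum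
        exact absurd hsum (not_le.mpr hxneg)
      · -- both negative: distinct values mod 2^e
        push_neg at hb
        obtain ⟨n, hn, hn1⟩ := neg_cases _ hb
        obtain ⟨k, hk, hk1, hke⟩ : ∃ k : ℤ, w π = (k : WithTop ℤ) ∧ 1 ≤ k ∧ k ≤ e := by
          cases hwp : w π with
          | top => rw [hwp] at hpe; simp at hpe
          | coe k =>
            refine ⟨k, rfl, ?_, ?_⟩
            · have := hp0; rw [hwp] at this
              exact_mod_cast this
            · have := hpe; rw [hwp] at this
              exact_mod_cast this
        have hy : w (π * b ^ 2 ^ e) = ((k + 2 ^ e * n : ℤ) : WithTop ℤ) := by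
          rw [AddValuation.map_mul, AddValuation.map_pow, hk, hn, withtop_nsmul_coe,
            ← WithTop.coe_add]
          norm_cast
        have hne : w (a ^ 2 ^ e) ≠ w (π * b ^ 2 ^ e) := by
          rw [hx, hy]
          intro h
          rw [WithTop.coe_eq_coe] at h
          have h2 : (2 : ℤ) ^ e ∣ k := ⟨m - n, by linarith⟩
          have := Int.le_of_dvd (by linarith) h2
          omega
        have := AddValuation.map_add_of_distinct_val w hne
        rw [this] at hsum
        have := le_trans hsum (min_le_left _ _)
        exact absurd this (not_le.mpr hxneg)
    -- case w b < 0
    · obtain ⟨n, hn, hn1⟩ := neg_cases _ hneg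
      obtain ⟨k, hk, hk1, hke⟩ : ∃ k : ℤ, w π = (k : WithTop ℤ) ∧ 1 ≤ k ∧ k ≤ e := by
        cases hwp : w π with
        | top => rw [hwp] at hpe; simp at hpe
        | coe k =>
          refine ⟨k, rfl, ?_, ?_⟩
          · have := hp0; rw [hwp] at this
            exact_mod_cast this
          · have := hpe; rw [hwp] at this
            exact_mod_cast this
      have hy : w (π * b ^ 2 ^ e) = ((k + 2 ^ e * n : ℤ) : WithTop ℤ) := by
        rw [AddValuation.map_mul, AddValuation.map_pow, hk, hn, withtop_nsmul_coe,
          ← WithTop.coe_add]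
        norm_cast
      have hyneg : w (π * b ^ 2 ^ e) < 0 := by
        rw [hy]
        have h2 : (0:ℤ) < 2 ^ e := pow_pos (by norm_num) e
        exact_mod_cast (by nlinarith : (k + 2 ^ e * n : ℤ) < 0)
      have hne : w (a ^ 2 ^ e) ≠ w (π * b ^ 2 ^ e) := by
        rw [AddValuation.map_pow, hy]
        cases hwa : w a with
        | top =>
          rw [nsmul_top_eq_top _ (Nat.pos_of_ne_zero (by positivity))]
          intro h
          norm_cast at h
        | coe m =>
          rw [withtop_nsmul_coe]
          intro h
          rw [WithTop.coe_eq_coe] at h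
          have h2 : (2 : ℤ) ∣ (2:ℤ)
            := ⟨1, by ring⟩
          have h3 : (2 : ℤ) ^ e ∣ k := ⟨m - n, by push_cast at h ⊢; linarith⟩
          have := Int.le_of_dvd (by linarith) h3
          omega
      have := AddValuation.map_add_of_distinct_val w hne
      rw [this] at hsum
      have := le_trans hsum (min_le_right _ _)
      exact absurd this (not_le.mpr hyneg)
end

section
/- Let F be a field, e ≥ 1, and w a discrete valuation on F with 0 < w(π) ≤ e. Then for every a ∈ F×: w(a) ≥ 0 if and only if w((π·a^{2^e})^{−1}) < 0. Equivalently, the complement of the set {w : w(a) ≥ 0} within a family of such valuations equals {w : w((π·a^{2^e})^{−1}) ≥ 0}. -/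
/-- Let `F` be a field, `e ≥ 1`, and `w` a discrete valuation on `F` with
`0 < w(π) ≤ e`. Then for every `a ∈ F×`: `w(a) ≥ 0` if and only if
`w((π·a^{2^e})⁻¹) < 0`. -/
theorem val_nonneg_iff_inv_neg {F : Type*} [Field F] (w : AddValuation F (WithTop ℤ))
    (e : ℕ) (he : 1 ≤ e) (π : F)
    (hπ0 : 0 < w π) (hπe : w π ≤ ((e : ℤ) : WithTop ℤ)) :
    ∀ a : F, a ≠ 0 → (0 ≤ w a ↔ w ((π * a ^ 2 ^ e)⁻¹) < 0) := by
  intro a ha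
  have hπne : π ≠ 0 := by
    intro h
    rw [h, AddValuation.map_zero] at hπe
    exact absurd hπe (by simp)
  obtain ⟨m, hm⟩ := WithTop.ne_top_iff_exists.mp (w.ne_top_iff.mpr hπne)
  obtain ⟨n, hn⟩ := WithTop.ne_top_iff_exists.mp (w.ne_top_iff.mpr ha)
  have key : w ((π * a ^ 2 ^ e)⁻¹) = ((-(m + 2 ^ e * n) : ℤ) : WithTop ℤ) := by
    rw [AddValuation.map_inv, AddValuation.map_mul, AddValuation.map_pow, ← hm, ← hn]
    rw [← WithTop.coe_nsmul, ← WithTop.coe_add, ← WithTop.LinearOrderedAddCommGroup.coe_neg,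
      WithTop.coe_eq_coe]
    push_cast
    ring
  rw [← hm] at hπ0 hπe
  rw [← hn, key]
  rw [show (0 : WithTop ℤ) = ((0 : ℤ) : WithTop ℤ) from rfl, WithTop.coe_le_coe,
    WithTop.coe_lt_coe]
  rw [show (0 : WithTop ℤ) = ((0 : ℤ) : WithTop ℤ) from rfl, WithTop.coe_lt_coe] at hπ0
  rw [WithTop.coe_le_coe] at hπe
  have h2 : (e : ℤ) < 2 ^ e := by exact_mod_cast (Nat.lt_two_pow_self (n := e))
  constructor
  · intro h
    nlinarith
  · intro h
    by_contra hneg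
    push_neg at hneg
    have hn1 : n ≤ -1 := by omega
    nlinarith
end

section
/- Let F be a real closed field, and a, b ∈ F×. Then the polynomial f(X,Y) = a·b·X²·Y² + a·X² + b·Y² − 1 has a zero in F². -/
/-- Let `F` be a real closed field (an ordered field in which every
non-negative element is a square and every polynomial of odd degree has a root), and
`a, b ∈ F×`. Then `f(X,Y) = a·b·X²·Y² + a·X² + b·Y² − 1` has a zero in `F²`. -/
theorem f_has_zero_of_real_closed {F : Type*} [Field F] [LinearOrder F] [IsStrictOrderedRing F]
    (hsq : ∀ z : F, 0 ≤ z → ∃ w : F, w ^ 2 = z)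
    (hodd : ∀ q : Polynomial F, Odd q.natDegree → ∃ r : F, q.eval r = 0)
    (a b : F) (ha : a ≠ 0) (hb : b ≠ 0) :
    ∃ x y : F, a * b * x ^ 2 * y ^ 2 + a * x ^ 2 + b * y ^ 2 - 1 = 0 := by
  rcases lt_or_gt_of_ne ha with hA | hA
  · rcases lt_or_gt_of_ne hb with hB | hB
    · -- a < 0, b < 0 : take y with y² = -2/b, x with x² = 3/(-a)
      obtain ⟨y, hy⟩ := hsq (-2 / b) (by
        rw [div_nonneg_iff]; right; constructor <;> linarith)
      obtain ⟨x, hx⟩ := hsq (3 / (-a)) (by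
        apply div_nonneg <;> linarith)
      have hby : b * y ^ 2 = -2 := by rw [hy]; field_simp
      have hax : a * x ^ 2 = -3 := by rw [hx]; field_simp
      exact ⟨x, y, by linear_combination (a * x ^ 2 + 1) * hby + (-1 : F) * hax⟩
    · -- a < 0, b > 0 : take y with y² = 2/b, x with x² = 1/(-3a)
      obtain ⟨y, hy⟩ := hsq (2 / b) (by positivity)
      obtain ⟨x, hx⟩ := hsq (1 / (-3 * a)) (by
        apply div_nonneg <;> linarith)
      have hby : b * y ^ 2 = 2 := by rw [hy]; field_simp
      have hax : a * x ^ 2 = -(1/3) := by rw [hx]; field_simp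
      exact ⟨x, y, by linear_combination (a * x ^ 2 + 1) * hby + (3 : F) * hax⟩
  · -- a > 0 : take y = 0, x with x² = 1/a
    obtain ⟨x, hx⟩ := hsq (1 / a) (by positivity)
    have hax : a * x ^ 2 = 1 := by rw [hx]; field_simp
    exact ⟨x, 0, by linear_combination hax⟩
end
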